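/- Rank Theorem for textile maps: Let f : U → C^p be a textile map on an m-adic neighbourhood U = m^l·C^m of 0 with f(0) = 0. Write f = ℓ + h with ℓ = T_0 f the tangent map of f at 0. Assume that ℓ admits a scission σ : C^p → C^m for which σ∘h is contractive on U, and that f has constant rank at 0 with respect to ker(ℓσ). Then there exist textile maps u : U → C^m and v : f(U) → C^p, invertible locally at 0, such that v ∘ f ∘ u^{-1} = ℓ. -/

import Mathlib

/- The Rank Theorem for textile maps. -/

noncomputable section

open MvPowerSeries

/-- Coefficient family of a vector of cords. -/
def cf {k : Type} [Field k] {n q : ℕ} (c : Fin q → MvPowerSeries (Fin n) k) :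
    Fin q × (Fin n →₀ ℕ) → k :=
  fun ν => MvPowerSeries.coeff ν.2 (c ν.1)

/-- Data of a textile map `C^q → C^p`. -/
def TexData (k : Type) [Field k] (n q p : ℕ) : Type :=
  Fin p × (Fin n →₀ ℕ) → MvPolynomial (Fin q × (Fin n →₀ ℕ)) k

/-- Evaluation of textile data. -/
def TexData.eval {k : Type} [Field k] {n q p : ℕ} (F : TexData k n q p)
    (c : Fin q → MvPowerSeries (Fin n) k) : Fin p → MvPowerSeries (Fin n) k :=
  fun j => (fun d => MvPolynomial.eval (cf c) (F (j, d)) : (Fin n →₀ ℕ) → k)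

/-- A map between cord spaces is textile if it is the evaluation of some textile data. -/
def IsTextile {k : Type} [Field k] {n q p : ℕ}
    (f : (Fin q → MvPowerSeries (Fin n) k) → Fin p → MvPowerSeries (Fin n) k) : Prop :=
  ∃ F : TexData k n q p, ∀ c, f c = F.eval c

/-- The tangent map `T_a f · v = Σ_ν ∂_ν f(a) · v_ν` of a textile map, obtained by
coefficientwise partial differentiation of the defining polynomials. -/
def TexData.tangent {k : Type} [Field k] {n q p : ℕ} (F : TexData k n q p)
    (a v : Fin q → MvPowerSeries (Fin n) k) : Fin p → MvPowerSeries (Fin n) k :=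
  fun j => (fun d => ∑ᶠ ν : Fin q × (Fin n →₀ ℕ),
    MvPolynomial.eval (cf a) (MvPolynomial.pderiv ν (F (j, d))) * cf v ν : (Fin n →₀ ℕ) → k)

/-- The order of a vector of cords, with values in `ℕ∞`. -/
def ordV {k : Type} [Field k] {n q : ℕ} (c : Fin q → MvPowerSeries (Fin n) k) : ℕ∞ :=
  sInf {N : ℕ∞ | ∃ (j : Fin q) (d : Fin n →₀ ℕ),
    MvPowerSeries.coeff d (c j) ≠ 0 ∧ N = (d.sum fun _ e => e : ℕ)}

/-- The `m`-adic neighbourhood `m^l · C^q` of `0`. -/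
def nbhd (k : Type) [Field k] (n q l : ℕ) : Set (Fin q → MvPowerSeries (Fin n) k) :=
  {c | ∀ (j : Fin q) (d : Fin n →₀ ℕ),
    (d.sum fun _ e => e) < l → MvPowerSeries.coeff d (c j) = 0}

/-- The `m`-adic neighbourhood `m^l` of `0` in `C` (parameter space of curves). -/
def cNbhd (k : Type) [Field k] (n l : ℕ) : Set (MvPowerSeries (Fin n) k) :=
  {s | ∀ d : Fin n →₀ ℕ, (d.sum fun _ e => e) < l → MvPowerSeries.coeff d s = 0}

/-- Evaluation of a curve (textile data `C → C^q`) at a parameter cord `s`. -/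
def CEval {k : Type} [Field k] {n q : ℕ} (γ : TexData k n 1 q)
    (s : MvPowerSeries (Fin n) k) : Fin q → MvPowerSeries (Fin n) k :=
  γ.eval (fun _ => s)

/-- `f` (given by textile data `F`) has constant rank at `0` with respect to `J`: for all
curves `γ` in `U` with `γ(0) = 0` and all curves `η` in `C^p` there are unique curves `ρ`
in `C^m` and `τ` in `J` with `η = T_γ f · ρ + τ`. -/
def HasConstRankAtZero {k : Type} [Field k] {n m p : ℕ} (F : TexData k n m p)
    (U : Set (Fin m → MvPowerSeries (Fin n) k))
    (J : Set (Fin p → MvPowerSeries (Fin n) k)) : Prop :=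
  ∀ (lV : ℕ) (γ : TexData k n 1 m),
    (∀ s ∈ cNbhd k n lV, CEval γ s ∈ U) → CEval γ 0 = 0 →
    ∀ η : TexData k n 1 p,
      ∃ (ρ : TexData k n 1 m) (τ : TexData k n 1 p),
        (∀ s ∈ cNbhd k n lV, CEval τ s ∈ J) ∧
        (∀ s ∈ cNbhd k n lV,
          CEval η s = F.tangent (CEval γ s) (CEval ρ s) + CEval τ s) ∧
        (∀ (ρ' : TexData k n 1 m) (τ' : TexData k n 1 p),
          (∀ s ∈ cNbhd k n lV, CEval τ' s ∈ J) →
          (∀ s ∈ cNbhd k n lV,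
            CEval η s = F.tangent (CEval γ s) (CEval ρ' s) + CEval τ' s) →
          ∀ s ∈ cNbhd k n lV, CEval ρ' s = CEval ρ s ∧ CEval τ' s = CEval τ s)

/-- `f` (given by textile data `F`) is flat at `0`: for every curve `γ` in `U` with
`γ(0) = 0`, evaluation at `s = 0` maps `ker(T_γ f)` surjectively onto `ker(T_0 f)`. -/
def FlatAtZero {k : Type} [Field k] {n m p : ℕ} (F : TexData k n m p)
    (U : Set (Fin m → MvPowerSeries (Fin n) k)) : Prop :=
  ∀ (lV : ℕ) (γ : TexData k n 1 m),
    (∀ s ∈ cNbhd k n lV, CEval γ s ∈ U) → CEval γ 0 = 0 →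
    ∀ v : Fin m → MvPowerSeries (Fin n) k, F.tangent 0 v = 0 →
      ∃ ρ : TexData k n 1 m,
        (∀ s ∈ cNbhd k n lV, F.tangent (CEval γ s) (CEval ρ s) = 0) ∧
        CEval ρ 0 = v



section Helpers
variable {k : Type} [Field k] {n q r p : ℕ}

lemma coeff_texEval (F : TexData k n q p) (c) (j : Fin p) (d) :
    MvPowerSeries.coeff d (F.eval c j) = MvPolynomial.eval (cf c) (F (j, d)) := rfl

lemma coeff_tangent (F : TexData k n q p) (a v) (j : Fin p) (d) :
    MvPowerSeries.coeff d (F.tangent a v j) =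
    ∑ ν ∈ (F (j, d)).vars,
      MvPolynomial.eval (cf a) (MvPolynomial.pderiv ν (F (j, d))) * cf v ν := by
  have h1 : MvPowerSeries.coeff d (F.tangent a v j)
      = ∑ᶠ ν, MvPolynomial.eval (cf a) (MvPolynomial.pderiv ν (F (j, d))) * cf v ν := rfl
  rw [h1]
  refine finsum_eq_sum_of_support_subset _ ?_
  intro ν hν
  simp only [Function.mem_support] at hν
  by_contra hmem
  rw [MvPolynomial.pderiv_eq_zero_of_notMem_vars hmem] at hν
  simp at hν

lemma cf_sub (v w : Fin q → MvPowerSeries (Fin n) k) : cf (v - w) = cf v - cf w := by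
  funext ν; simp [cf, map_sub]

lemma tangent_sub (F : TexData k n q p) (a v w) :
    F.tangent a (v - w) = F.tangent a v - F.tangent a w := by
  funext j
  apply MvPowerSeries.ext; intro d
  rw [Pi.sub_apply, map_sub, coeff_tangent, coeff_tangent, coeff_tangent,
    ← Finset.sum_sub_distrib]
  refine Finset.sum_congr rfl fun ν _ => ?_
  rw [cf_sub, Pi.sub_apply, mul_sub]

lemma tangent_zero (F : TexData k n q p) (a) : F.tangent a 0 = 0 := by
  funext j
  apply MvPowerSeries.ext; intro d
  rw [coeff_tangent]
  have : ∀ ν, cf (0 : Fin q → MvPowerSeries (Fin n) k) ν = 0 := by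
    intro ν; simp [cf]
  simp [this]

lemma ordV_zero : ordV (0 : Fin q → MvPowerSeries (Fin n) k) = ⊤ := by
  unfold ordV
  rw [sInf_eq_top]
  rintro N ⟨j, d, hne, rfl⟩
  simp at hne

lemma ordV_neg (x : Fin q → MvPowerSeries (Fin n) k) : ordV (-x) = ordV x := by
  unfold ordV
  congr 1
  ext N
  constructor
  · rintro ⟨j, d, hne, rfl⟩
    exact ⟨j, d, by simpa using hne, rfl⟩
  · rintro ⟨j, d, hne, rfl⟩
    exact ⟨j, d, by simpa using hne, rfl⟩

lemma coeff_eq_zero_of_lt_ordV {x : Fin q → MvPowerSeries (Fin n) k} {j : Fin q}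
    {d : Fin n →₀ ℕ} (h : ((d.sum fun _ e => e : ℕ) : ℕ∞) < ordV x) :
    MvPowerSeries.coeff d (x j) = 0 := by
  by_contra hne
  have : ordV x ≤ ((d.sum fun _ e => e : ℕ) : ℕ∞) := sInf_le ⟨j, d, hne, rfl⟩
  exact absurd this (not_le.2 h)

lemma mem_nbhd_iff {l : ℕ} {x : Fin q → MvPowerSeries (Fin n) k} :
    x ∈ nbhd k n q l ↔ (l : ℕ∞) ≤ ordV x := by
  constructor
  · intro hx
    refine le_sInf ?_
    rintro N ⟨j, d, hne, rfl⟩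
    rw [Nat.cast_le]
    by_contra hlt
    exact hne (hx j d (by omega))
  · intro h j d hd
    exact coeff_eq_zero_of_lt_ordV (lt_of_lt_of_le (by exact_mod_cast hd) h)

lemma zero_mem_nbhd {l : ℕ} : (0 : Fin q → MvPowerSeries (Fin n) k) ∈ nbhd k n q l :=
  fun j d _ => by simp

lemma add_mem_nbhd {l : ℕ} {x y : Fin q → MvPowerSeries (Fin n) k}
    (hx : x ∈ nbhd k n q l) (hy : y ∈ nbhd k n q l) : x + y ∈ nbhd k n q l := by
  intro j d hd
  rw [Pi.add_apply, map_add, hx j d hd, hy j d hd, add_zero]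

lemma sub_mem_nbhd {l : ℕ} {x y : Fin q → MvPowerSeries (Fin n) k}
    (hx : x ∈ nbhd k n q l) (hy : y ∈ nbhd k n q l) : x - y ∈ nbhd k n q l := by
  intro j d hd
  rw [Pi.sub_apply, map_sub, hx j d hd, hy j d hd, sub_zero]

lemma eval_bind₁' (g : (Fin q × (Fin n →₀ ℕ)) → k)
    (h : (Fin r × (Fin n →₀ ℕ)) → MvPolynomial (Fin q × (Fin n →₀ ℕ)) k)
    (φ : MvPolynomial (Fin r × (Fin n →₀ ℕ)) k) :
    MvPolynomial.eval g (MvPolynomial.bind₁ h φ) =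
      MvPolynomial.eval (fun i => MvPolynomial.eval g (h i)) φ :=
  MvPolynomial.eval₂Hom_bind₁ (RingHom.id k) g h φ

lemma isTextile_comp {g : (Fin r → MvPowerSeries (Fin n) k) → Fin p → MvPowerSeries (Fin n) k}
    {f : (Fin q → MvPowerSeries (Fin n) k) → Fin r → MvPowerSeries (Fin n) k}
    (hg : IsTextile g) (hf : IsTextile f) : IsTextile (fun c => g (f c)) := by
  obtain ⟨G, hG⟩ := hg
  obtain ⟨Fd, hF⟩ := hf
  refine ⟨fun jd => MvPolynomial.bind₁ Fd (G jd), fun c => ?_⟩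
  show g (f c) = _
  funext j
  apply MvPowerSeries.ext; intro d
  rw [hG, hF]
  show MvPolynomial.eval (cf (Fd.eval c)) (G (j, d)) = _
  show _ = MvPolynomial.eval (cf c) (MvPolynomial.bind₁ Fd (G (j, d)))
  exact (eval_bind₁' (cf c) Fd (G (j, d))).symm

lemma isTextile_id : IsTextile (fun c : Fin q → MvPowerSeries (Fin n) k => c) := by
  refine ⟨fun jd => MvPolynomial.X jd, fun c => ?_⟩
  funext j
  apply MvPowerSeries.ext; intro d
  show _ = MvPolynomial.eval (cf c) (MvPolynomial.X (j, d))
  rw [MvPolynomial.eval_X]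
  rfl

lemma isTextile_add {f g : (Fin q → MvPowerSeries (Fin n) k) → Fin p → MvPowerSeries (Fin n) k}
    (hf : IsTextile f) (hg : IsTextile g) : IsTextile (fun c => f c + g c) := by
  obtain ⟨Fd, hF⟩ := hf
  obtain ⟨Gd, hG⟩ := hg
  refine ⟨fun jd => Fd jd + Gd jd, fun c => ?_⟩
  show f c + g c = _
  funext j
  apply MvPowerSeries.ext; intro d
  rw [Pi.add_apply, map_add, hF, hG, coeff_texEval, coeff_texEval]
  show _ = MvPolynomial.eval (cf c) (Fd (j, d) + Gd (j, d))
  rw [map_add]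

lemma isTextile_sub {f g : (Fin q → MvPowerSeries (Fin n) k) → Fin p → MvPowerSeries (Fin n) k}
    (hf : IsTextile f) (hg : IsTextile g) : IsTextile (fun c => f c - g c) := by
  obtain ⟨Fd, hF⟩ := hf
  obtain ⟨Gd, hG⟩ := hg
  refine ⟨fun jd => Fd jd - Gd jd, fun c => ?_⟩
  show f c - g c = _
  funext j
  apply MvPowerSeries.ext; intro d
  rw [Pi.sub_apply, map_sub, hF, hG, coeff_texEval, coeff_texEval]
  show _ = MvPolynomial.eval (cf c) (Fd (j, d) - Gd (j, d))
  rw [map_sub]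

lemma isTextile_eval (F : TexData k n q p) : IsTextile F.eval := ⟨F, fun _ => rfl⟩

lemma isTextile_tangent (F : TexData k n q p) (a : Fin q → MvPowerSeries (Fin n) k) :
    IsTextile (F.tangent a) := by
  refine ⟨fun jd => ∑ ν ∈ (F jd).vars,
    MvPolynomial.C (MvPolynomial.eval (cf a) (MvPolynomial.pderiv ν (F jd))) *
      MvPolynomial.X ν, fun v => ?_⟩
  funext j
  apply MvPowerSeries.ext; intro d
  rw [coeff_tangent]
  show _ = MvPolynomial.eval (cf v) (∑ ν ∈ (F (j, d)).vars,
    MvPolynomial.C (MvPolynomial.eval (cf a) (MvPolynomial.pderiv ν (F (j, d)))) *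
      MvPolynomial.X ν)
  rw [map_sum]
  refine Finset.sum_congr rfl fun ν _ => ?_
  rw [MvPolynomial.eval_mul, MvPolynomial.eval_C, MvPolynomial.eval_X]


def phiMap (F : TexData k n q p) (σd : TexData k n p q) :
    (Fin q → MvPowerSeries (Fin n) k) → Fin q → MvPowerSeries (Fin n) k :=
  fun a => σd.eval (F.eval a - F.tangent 0 a)

def wSeq (F : TexData k n q p) (σd : TexData k n p q) :
    ℕ → (Fin q → MvPowerSeries (Fin n) k) → Fin q → MvPowerSeries (Fin n) k
  | 0 => fun b => b
  | e + 1 => fun b => b - phiMap F σd (wSeq F σd e b)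

def uinvMap (F : TexData k n q p) (σd : TexData k n p q) :
    (Fin q → MvPowerSeries (Fin n) k) → Fin q → MvPowerSeries (Fin n) k :=
  fun b j => (fun d => MvPowerSeries.coeff d
    (wSeq F σd (d.sum fun _ e => e) b j) : (Fin n →₀ ℕ) → k)

lemma isTextile_phi (F : TexData k n q p) (σd : TexData k n p q) :
    IsTextile (phiMap F σd) := by
  unfold phiMap
  exact isTextile_comp (isTextile_eval σd) (isTextile_sub (isTextile_eval F) (isTextile_tangent F 0))

lemma isTextile_wSeq (F : TexData k n q p) (σd : TexData k n p q) (e : ℕ) :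
    IsTextile (wSeq F σd e) := by
  induction e with
  | zero => exact isTextile_id
  | succ e ih =>
      exact isTextile_sub isTextile_id (isTextile_comp (isTextile_phi F σd) ih)

lemma coeff_uinvMap (F : TexData k n q p) (σd : TexData k n p q) (b) (j : Fin q) (d) :
    MvPowerSeries.coeff d (uinvMap F σd b j) =
      MvPowerSeries.coeff d (wSeq F σd (d.sum fun _ e => e) b j) := rfl

lemma isTextile_uinvMap (F : TexData k n q p) (σd : TexData k n p q) :
    IsTextile (uinvMap F σd) := by
  refine ⟨fun jd => (isTextile_wSeq F σd (jd.2.sum fun _ e => e)).choose jd, fun b => ?_⟩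
  funext j
  apply MvPowerSeries.ext; intro d
  rw [coeff_uinvMap, (isTextile_wSeq F σd (d.sum fun _ e => e)).choose_spec b]
  rfl

lemma phi_estimate {l : ℕ} (F : TexData k n q p) (σd : TexData k n p q)
    (hφ0 : phiMap F σd 0 = 0)
    (hcontr : ∀ a ∈ nbhd k n q l, ∀ b ∈ nbhd k n q l, a ≠ b →
      ordV (a - b) < ordV (phiMap F σd a - phiMap F σd b)) :
    ∀ a ∈ nbhd k n q l, phiMap F σd a ∈ nbhd k n q l ∧ (0 : ℕ∞) < ordV (phiMap F σd a) := by
  intro a ha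
  by_cases h0 : a = 0
  · subst h0
    rw [hφ0]
    exact ⟨zero_mem_nbhd, by rw [ordV_zero]; exact WithTop.top_pos⟩
  · have h := hcontr a ha 0 zero_mem_nbhd h0
    rw [sub_zero, hφ0, sub_zero] at h
    have hla : (l : ℕ∞) ≤ ordV a := mem_nbhd_iff.1 ha
    exact ⟨mem_nbhd_iff.2 (le_of_lt (lt_of_le_of_lt hla h)),
      lt_of_le_of_lt zero_le h⟩

lemma wSeq_key {l : ℕ} (F : TexData k n q p) (σd : TexData k n p q)
    (hφ0 : phiMap F σd 0 = 0)
    (hcontr : ∀ a ∈ nbhd k n q l, ∀ b ∈ nbhd k n q l, a ≠ b →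
      ordV (a - b) < ordV (phiMap F σd a - phiMap F σd b)) :
    ∀ (e : ℕ), ∀ a ∈ nbhd k n q l,
      wSeq F σd e (a + phiMap F σd a) ∈ nbhd k n q l ∧
      (e : ℕ∞) < ordV (wSeq F σd e (a + phiMap F σd a) - a) := by
  intro e
  induction e with
  | zero =>
      intro a ha
      obtain ⟨hmem, hpos⟩ := phi_estimate F σd hφ0 hcontr a ha
      constructor
      · exact add_mem_nbhd ha hmem
      · show (0 : ℕ∞) < ordV (a + phiMap F σd a - a)
        rwa [add_sub_cancel_left]
  | succ e ih =>
      intro a ha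
      obtain ⟨hxmem, hxe⟩ := ih a ha
      set x := wSeq F σd e (a + phiMap F σd a) with hx
      have hstep : wSeq F σd (e + 1) (a + phiMap F σd a)
          = a + (phiMap F σd a - phiMap F σd x) := by
        show a + phiMap F σd a - phiMap F σd x = _
        rw [add_sub_assoc]
      by_cases hxa : x = a
      · rw [hstep, hxa, sub_self, add_zero]
        refine ⟨ha, ?_⟩
        rw [sub_self, ordV_zero]
        exact WithTop.coe_lt_top _
      · have hc := hcontr a ha x hxmem (fun h => hxa h.symm)
        have hax : ordV (a - x) = ordV (x - a) := by
          rw [← neg_sub, ordV_neg]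
        have h1 : ((e : ℕ∞) + 1) ≤ ordV (a - x) := by
          rw [hax]
          exact Order.add_one_le_of_lt hxe
        have h2 : ((e + 1 : ℕ) : ℕ∞) < ordV (phiMap F σd a - phiMap F σd x) := by
          push_cast
          exact lt_of_le_of_lt h1 hc
        constructor
        · rw [hstep]
          refine add_mem_nbhd ha (mem_nbhd_iff.2 ?_)
          have : (l : ℕ∞) ≤ ordV (a - x) := mem_nbhd_iff.1 (sub_mem_nbhd ha hxmem)
          exact le_of_lt (lt_of_le_of_lt this hc)
        · rw [hstep, add_sub_cancel_left]
          exact h2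

lemma uinv_comp {l : ℕ} (F : TexData k n q p) (σd : TexData k n p q)
    (hφ0 : phiMap F σd 0 = 0)
    (hcontr : ∀ a ∈ nbhd k n q l, ∀ b ∈ nbhd k n q l, a ≠ b →
      ordV (a - b) < ordV (phiMap F σd a - phiMap F σd b)) :
    ∀ a ∈ nbhd k n q l, uinvMap F σd (a + phiMap F σd a) = a := by
  intro a ha
  funext j
  apply MvPowerSeries.ext; intro d
  rw [coeff_uinvMap]
  have key := (wSeq_key F σd hφ0 hcontr (d.sum fun _ e => e) a ha).2
  have hz := coeff_eq_zero_of_lt_ordV (j := j) (d := d) key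
  rw [Pi.sub_apply, map_sub, sub_eq_zero] at hz
  exact hz


end Helpers

section Helpers2
variable {k : Type} [Field k] {n q p : ℕ}

/-- Constant curve data. -/
def constData (v : Fin q → MvPowerSeries (Fin n) k) : TexData k n 1 q :=
  fun jd => MvPolynomial.C (MvPowerSeries.coeff jd.2 (v jd.1))

lemma ceval_zeroData (s : MvPowerSeries (Fin n) k) :
    CEval (fun _ => 0 : TexData k n 1 q) s = 0 := by
  funext j
  apply MvPowerSeries.ext; intro d
  have h : MvPowerSeries.coeff d (CEval (fun _ => 0 : TexData k n 1 q) s j)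
      = MvPolynomial.eval (cf (fun _ => s)) ((0 : MvPolynomial (Fin 1 × (Fin n →₀ ℕ)) k)) := rfl
  rw [h, map_zero]
  simp

lemma ceval_constData (v : Fin q → MvPowerSeries (Fin n) k) (s : MvPowerSeries (Fin n) k) :
    CEval (constData v) s = v := by
  funext j
  apply MvPowerSeries.ext; intro d
  have h : MvPowerSeries.coeff d (CEval (constData v) s j)
      = MvPolynomial.eval (cf (fun _ => s)) (MvPolynomial.C (MvPowerSeries.coeff d (v j))) := rfl
  rw [h, MvPolynomial.eval_C]

end Helpers2

/-- **Rank Theorem for textile maps.**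
Let `f = ℓ + h` be a textile map on `U = m^l·C^m` with `f(0) = 0` and `ℓ = T_0 f`. Assume
`ℓ` admits a scission `σ` for which `σ∘h` is contractive on `U`, and that `f` has constant
rank at `0` with respect to `ker(ℓσ)`. Then there are textile maps `u` and `v`, invertible
locally at `0` (with textile local inverses), with `v ∘ f ∘ u⁻¹ = ℓ`, i.e. `v(f a) = ℓ(u a)`
for all `a` near `0`. -/
theorem rank_theorem_textile
    {k : Type} [Field k] [CharZero k] {n m p : ℕ} (l : ℕ)
    (U : Set (Fin m → MvPowerSeries (Fin n) k)) (hU : U = nbhd k n m l)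
    (F : TexData k n m p) (hf0 : F.eval 0 = 0)
    (σd : TexData k n p m) (hσ_lin : IsLinearMap k σd.eval)
    (hscis : ∀ z, F.tangent 0 (σd.eval (F.tangent 0 z)) = F.tangent 0 z)
    (hcontr : ∀ a ∈ U, ∀ b ∈ U, a ≠ b →
      ordV (a - b) < ordV (σd.eval (F.eval a - F.tangent 0 a) -
        σd.eval (F.eval b - F.tangent 0 b)))
    (hrank : HasConstRankAtZero F U {b | F.tangent 0 (σd.eval b) = 0}) :
    ∃ (u uinv : (Fin m → MvPowerSeries (Fin n) k) → Fin m → MvPowerSeries (Fin n) k)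
      (v vinv : (Fin p → MvPowerSeries (Fin n) k) → Fin p → MvPowerSeries (Fin n) k)
      (l' : ℕ), l ≤ l' ∧
      IsTextile u ∧ IsTextile uinv ∧ IsTextile v ∧ IsTextile vinv ∧
      u 0 = 0 ∧ v 0 = 0 ∧
      (∀ a ∈ nbhd k n m l', uinv (u a) = a) ∧
      (∀ b ∈ F.eval '' nbhd k n m l', vinv (v b) = b) ∧
      (∀ a ∈ nbhd k n m l', v (F.eval a) = F.tangent 0 (u a)) := by
  subst hU
  have h0cN : (0 : MvPowerSeries (Fin n) k) ∈ cNbhd k n 0 :=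
    fun d hd => absurd hd (Nat.not_lt_zero _)
  -- Step 1: the tangent map at 0 is injective (from constant rank)
  have hinj : ∀ z : Fin m → MvPowerSeries (Fin n) k, F.tangent 0 z = 0 → z = 0 := by
    intro z hz
    have hγU : ∀ s ∈ cNbhd k n 0, CEval (fun _ => 0 : TexData k n 1 m) s ∈ nbhd k n m l := by
      intro s _
      rw [ceval_zeroData]
      exact zero_mem_nbhd
    obtain ⟨ρ, τ, hτ, heq, huni⟩ :=
      hrank 0 (fun _ => 0) hγU (ceval_zeroData 0) (fun _ => 0)
    have hJ0 : ∀ s ∈ cNbhd k n 0,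
        CEval (fun _ => 0 : TexData k n 1 p) s ∈ {b | F.tangent 0 (σd.eval b) = 0} := by
      intro s _
      rw [ceval_zeroData]
      show F.tangent 0 (σd.eval 0) = 0
      rw [hσ_lin.map_zero, tangent_zero]
    have heq1 : ∀ s ∈ cNbhd k n 0, CEval (fun _ => 0 : TexData k n 1 p) s =
        F.tangent (CEval (fun _ => 0 : TexData k n 1 m) s) (CEval (constData z) s) +
        CEval (fun _ => 0 : TexData k n 1 p) s := by
      intro s _
      rw [ceval_zeroData, ceval_zeroData, ceval_constData, hz, add_zero]
    have heq2 : ∀ s ∈ cNbhd k n 0, CEval (fun _ => 0 : TexData k n 1 p) s =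
        F.tangent (CEval (fun _ => 0 : TexData k n 1 m) s)
          (CEval (fun _ => 0 : TexData k n 1 m) s) +
        CEval (fun _ => 0 : TexData k n 1 p) s := by
      intro s _
      rw [ceval_zeroData, ceval_zeroData, tangent_zero, add_zero]
    have h1 := (huni (constData z) (fun _ => 0) hJ0 heq1 0 h0cN).1
    have h2 := (huni (fun _ => 0) (fun _ => 0) hJ0 heq2 0 h0cN).1
    rw [ceval_constData] at h1
    rw [ceval_zeroData] at h2
    rw [h1, ← h2]
  -- Step 2: σ is a left inverse of the tangent map at 0
  have hσl : ∀ z, σd.eval (F.tangent 0 z) = z := by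
    intro z
    have h : F.tangent 0 (σd.eval (F.tangent 0 z) - z) = 0 := by
      rw [tangent_sub, hscis, sub_self]
    exact sub_eq_zero.1 (hinj _ h)
  have hφ0 : phiMap F σd 0 = 0 := by
    show σd.eval (F.eval 0 - F.tangent 0 0) = 0
    rw [hf0, tangent_zero, sub_zero, hσ_lin.map_zero]
  have hcontr' : ∀ a ∈ nbhd k n m l, ∀ b ∈ nbhd k n m l, a ≠ b →
      ordV (a - b) < ordV (phiMap F σd a - phiMap F σd b) := hcontr
  have hu : ∀ a, a + phiMap F σd a = σd.eval (F.eval a) := by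
    intro a
    show a + σd.eval (F.eval a - F.tangent 0 a) = _
    rw [hσ_lin.map_sub, hσl]
    abel
  have huinv : ∀ a ∈ nbhd k n m l, uinvMap F σd (a + phiMap F σd a) = a :=
    uinv_comp F σd hφ0 hcontr'
  have huinvσf : ∀ a ∈ nbhd k n m l, uinvMap F σd (σd.eval (F.eval a)) = a := by
    intro a ha
    rw [← hu]
    exact huinv a ha
  have huinv0 : uinvMap F σd 0 = 0 := by
    have h := huinv 0 zero_mem_nbhd
    rwa [hφ0, add_zero] at h
  -- the key computation: v (f a) = ℓ (σ (f a)) = ℓ (u a)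
  have hva : ∀ a ∈ nbhd k n m l,
      F.tangent 0 (σd.eval (F.eval (uinvMap F σd (σd.eval (F.eval a))))) +
        (F.eval a - F.eval (uinvMap F σd (σd.eval (F.eval a))))
      = F.tangent 0 (σd.eval (F.eval a)) := by
    intro a ha
    rw [huinvσf a ha, sub_self, add_zero]
  refine ⟨fun a => a + phiMap F σd a, uinvMap F σd,
    fun b => F.tangent 0 (σd.eval (F.eval (uinvMap F σd (σd.eval b)))) +
      (b - F.eval (uinvMap F σd (σd.eval b))),
    fun c => F.eval (uinvMap F σd (σd.eval c)) + (c - F.tangent 0 (σd.eval c)),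
    l, le_refl l, ?_, ?_, ?_, ?_, ?_, ?_, ?_, ?_, ?_⟩
  · exact isTextile_add isTextile_id (isTextile_phi F σd)
  · exact isTextile_uinvMap F σd
  · exact isTextile_add
      (isTextile_comp (isTextile_tangent F 0)
        (isTextile_comp (isTextile_eval σd)
          (isTextile_comp (isTextile_eval F)
            (isTextile_comp (isTextile_uinvMap F σd) (isTextile_eval σd)))))
      (isTextile_sub isTextile_id
        (isTextile_comp (isTextile_eval F)
          (isTextile_comp (isTextile_uinvMap F σd) (isTextile_eval σd))))
  · exact isTextile_add
      (isTextile_comp (isTextile_eval F)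
        (isTextile_comp (isTextile_uinvMap F σd) (isTextile_eval σd)))
      (isTextile_sub isTextile_id
        (isTextile_comp (isTextile_tangent F 0) (isTextile_eval σd)))
  · show (0 : Fin m → MvPowerSeries (Fin n) k) + phiMap F σd 0 = 0
    rw [hφ0, add_zero]
  · show F.tangent 0 (σd.eval (F.eval (uinvMap F σd (σd.eval 0)))) +
      ((0 : Fin p → MvPowerSeries (Fin n) k) - F.eval (uinvMap F σd (σd.eval 0))) = 0
    rw [hσ_lin.map_zero, huinv0, hf0, hσ_lin.map_zero, tangent_zero, sub_zero, add_zero]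
  · intro a ha
    exact huinv a ha
  · rintro b ⟨a, ha, rfl⟩
    beta_reduce
    rw [hva a ha, hσl, huinvσf a ha, sub_self, add_zero]
  · intro a ha
    show F.tangent 0 (σd.eval (F.eval (uinvMap F σd (σd.eval (F.eval a))))) +
        (F.eval a - F.eval (uinvMap F σd (σd.eval (F.eval a))))
      = F.tangent 0 (a + phiMap F σd a)
    rw [hva a ha, hu]
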